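/- arXiv:2104.04679 — 2 statements merged into one kernel-verified Lean document; each statement's English description precedes it below -/
import Mathlib

section
/- Let x_1, ..., x_n be pairwise distinct points in R^M. Define the 2-Wasserstein distance between point clouds of equal size n as d_W(x_{1:n}, y_{1:n}) = sqrt(min over permutations σ ∈ S_n of (1/n) Σ_{i=1}^n ‖x_i − y_{σ(i)}‖²). Then there exists a constant c > 0 such that for all 0 < δ < c, the Wasserstein ball {y_{1:n} ∈ R^{nM} : d_W(x_{1:n}, y_{1:n}) ≤ δ} equals the union over all permutations σ ∈ S_n of the closed Euclidean balls of radius √n·δ in R^{nM} centered at x_{σ(1:n)}, and moreover these Euclidean balls are pairwise disjoint for distinct permutations. -/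
open MeasureTheory Metric Real Asymptotics
open scoped BigOperators ENNReal

noncomputable def concat {n M : ℕ} (x : Fin n → EuclideanSpace ℝ (Fin M)) :
    EuclideanSpace ℝ (Fin n × Fin M) :=
  WithLp.toLp 2 (fun p => x p.1 p.2)

noncomputable def deconcat {n M : ℕ} (z : EuclideanSpace ℝ (Fin n × Fin M)) :
    Fin n → EuclideanSpace ℝ (Fin M) :=
  fun i => WithLp.toLp 2 (fun m => z (i, m))

noncomputable def dW {n M : ℕ} (x y : Fin n → EuclideanSpace ℝ (Fin M)) : ℝ :=
  Real.sqrt (⨅ σ : Equiv.Perm (Fin n), (1 / (n : ℝ)) * ∑ i, dist (x i) (y (σ i)) ^ 2)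

lemma dist_concat_eq {n M : ℕ} (z : EuclideanSpace ℝ (Fin n × Fin M))
    (w : Fin n → EuclideanSpace ℝ (Fin M)) :
    dist z (concat w) = Real.sqrt (∑ i, dist (deconcat z i) (w i) ^ 2) := by
  rw [EuclideanSpace.dist_eq]
  congr 1
  rw [Fintype.sum_prod_type]
  refine Finset.sum_congr rfl fun i _ => ?_
  rw [EuclideanSpace.dist_eq, Real.sq_sqrt (Finset.sum_nonneg fun m _ => sq_nonneg _)]
  rfl

lemma mem_ball_iff {n M : ℕ} (x : Fin n → EuclideanSpace ℝ (Fin M))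
    (z : EuclideanSpace ℝ (Fin n × Fin M)) (σ : Equiv.Perm (Fin n)) {δ : ℝ} (hδ : 0 ≤ δ) :
    z ∈ closedBall (concat (x ∘ σ)) (Real.sqrt n * δ) ↔
      ∑ i, dist (deconcat z i) (x (σ i)) ^ 2 ≤ n * δ ^ 2 := by
  have h1 : Real.sqrt n * δ = Real.sqrt (n * δ ^ 2) := by
    rw [Real.sqrt_mul (by positivity), Real.sqrt_sq hδ]
  rw [mem_closedBall, dist_concat_eq, h1,
    Real.sqrt_le_sqrt_iff (by positivity)]
  rfl

lemma dW_le_iff {n M : ℕ} (x y : Fin n → EuclideanSpace ℝ (Fin M)) {δ : ℝ} (hδ : 0 ≤ δ) :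
    dW x y ≤ δ ↔ ∃ σ : Equiv.Perm (Fin n), ∑ i, dist (x i) (y (σ i)) ^ 2 ≤ n * δ ^ 2 := by
  obtain ⟨σ₀, hσ₀⟩ := Finite.exists_min
    (fun σ : Equiv.Perm (Fin n) => (1 / (n : ℝ)) * ∑ i, dist (x i) (y (σ i)) ^ 2)
  have hinf : (⨅ σ : Equiv.Perm (Fin n), (1 / (n : ℝ)) * ∑ i, dist (x i) (y (σ i)) ^ 2) =
      (1 / (n : ℝ)) * ∑ i, dist (x i) (y (σ₀ i)) ^ 2 :=
    le_antisymm (ciInf_le (Finite.bddBelow_range _) σ₀) (le_ciInf hσ₀)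
  have key : ∀ σ : Equiv.Perm (Fin n),
      (1 / (n : ℝ)) * ∑ i, dist (x i) (y (σ i)) ^ 2 ≤ δ ^ 2 ↔
        ∑ i, dist (x i) (y (σ i)) ^ 2 ≤ n * δ ^ 2 := by
    intro σ
    rcases Nat.eq_zero_or_pos n with h0 | hpos
    · subst h0
      simp
      positivity
    · have hn : (0 : ℝ) < n := by exact_mod_cast hpos
      rw [one_div, inv_mul_le_iff₀ hn]
  have hdw : dW x y ≤ δ ↔
      (1 / (n : ℝ)) * ∑ i, dist (x i) (y (σ₀ i)) ^ 2 ≤ δ ^ 2 := by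
    unfold dW
    rw [hinf, Real.sqrt_le_iff, and_iff_right hδ]
  rw [hdw]
  constructor
  · intro h
    exact ⟨σ₀, (key σ₀).1 h⟩
  · rintro ⟨σ, hσ⟩
    exact le_trans (hσ₀ σ) ((key σ).2 hσ)

lemma sum_swap_perm {n M : ℕ} (x y : Fin n → EuclideanSpace ℝ (Fin M))
    (σ : Equiv.Perm (Fin n)) :
    ∑ i, dist (x i) (y (σ i)) ^ 2 = ∑ i, dist (y i) (x (σ⁻¹ i)) ^ 2 := by
  have h := Equiv.sum_comp σ (fun i => dist (x (σ⁻¹ i)) (y i) ^ 2)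
  simp only [show ∀ i, σ⁻¹ (σ i) = i from fun i => σ.symm_apply_apply i] at h
  have h2 : ∀ i, dist (y i) (x (σ⁻¹ i)) ^ 2 = dist (x (σ⁻¹ i)) (y i) ^ 2 :=
    fun i => by rw [dist_comm]
  simp_rw [h2]
  exact h

lemma deconcat_concat {n M : ℕ} (w : Fin n → EuclideanSpace ℝ (Fin M)) :
    deconcat (concat w) = w := rfl

lemma dist_concat_concat {n M : ℕ} (a b : Fin n → EuclideanSpace ℝ (Fin M)) :
    dist (concat a) (concat b) = Real.sqrt (∑ i, dist (a i) (b i) ^ 2) := by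
  rw [dist_concat_eq, deconcat_concat]

theorem stmt1 {n M : ℕ} (x : Fin n → EuclideanSpace ℝ (Fin M))
    (hx : Function.Injective x) :
    ∃ c > 0, ∀ δ : ℝ, 0 < δ → δ < c →
      ({z : EuclideanSpace ℝ (Fin n × Fin M) | dW x (deconcat z) ≤ δ} =
        ⋃ σ : Equiv.Perm (Fin n), closedBall (concat (x ∘ σ)) (Real.sqrt n * δ)) ∧
      (Set.univ : Set (Equiv.Perm (Fin n))).Pairwise fun σ₁ σ₂ =>
        Disjoint (closedBall (concat (x ∘ σ₁)) (Real.sqrt n * δ))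
          (closedBall (concat (x ∘ σ₂)) (Real.sqrt n * δ)) := by
  classical
  -- the set equality holds for every δ ≥ 0
  have hset : ∀ δ : ℝ, 0 ≤ δ →
      ({z : EuclideanSpace ℝ (Fin n × Fin M) | dW x (deconcat z) ≤ δ} =
        ⋃ σ : Equiv.Perm (Fin n), closedBall (concat (x ∘ σ)) (Real.sqrt n * δ)) := by
    intro δ hδ
    ext z
    simp only [Set.mem_setOf_eq, Set.mem_iUnion]
    rw [dW_le_iff x (deconcat z) hδ]
    constructor
    · rintro ⟨σ, hσ⟩
      refine ⟨σ⁻¹, (mem_ball_iff x z σ⁻¹ hδ).2 ?_⟩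
      rwa [sum_swap_perm x (deconcat z) σ] at hσ
    · rintro ⟨σ, hσ⟩
      refine ⟨σ⁻¹, ?_⟩
      rw [sum_swap_perm x (deconcat z) σ⁻¹, inv_inv]
      exact (mem_ball_iff x z σ hδ).1 hσ
  by_cases hn : n < 2
  · -- trivial case: the permutation group is a subsingleton
    refine ⟨1, one_pos, fun δ hδ hδc => ⟨hset δ hδ.le, ?_⟩⟩
    intro σ₁ _ σ₂ _ hne
    interval_cases n
    · exact absurd (Subsingleton.elim σ₁ σ₂) hne
    · exact absurd (Subsingleton.elim σ₁ σ₂) hne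
  · push_neg at hn
    -- minimal distance between distinct points
    obtain ⟨ε, hεpos, hεle⟩ : ∃ ε > 0, ∀ i j : Fin n, i ≠ j → ε ≤ dist (x i) (x j) := by
      classical
      set s : Finset (Fin n × Fin n) := Finset.univ.filter (fun p => p.1 ≠ p.2) with hs
      have hsne : s.Nonempty := by
        refine ⟨(⟨0, by omega⟩, ⟨1, by omega⟩), ?_⟩
        simp [hs, Fin.ext_iff]
      obtain ⟨p₀, hp₀s, hp₀min⟩ := Finset.exists_min_image s
        (fun p => dist (x p.1) (x p.2)) hsne
      have hp₀ : p₀.1 ≠ p₀.2 := by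
        simp only [hs, Finset.mem_filter] at hp₀s
        exact hp₀s.2
      refine ⟨dist (x p₀.1) (x p₀.2), dist_pos.2 fun h => hp₀ (hx h), fun i j hij => ?_⟩
      exact hp₀min (i, j) (by simp [hs, hij])
    set c : ℝ := ε / (2 * Real.sqrt n + 1) with hc
    have hsq : (0 : ℝ) < Real.sqrt n := Real.sqrt_pos.2 (by positivity)
    have hden : (0 : ℝ) < 2 * Real.sqrt n + 1 := by positivity
    refine ⟨c, by positivity, fun δ hδ hδc => ⟨hset δ hδ.le, ?_⟩⟩
    intro σ₁ _ σ₂ _ hne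
    apply closedBall_disjoint_closedBall
    -- pick a coordinate where the permutations differ
    have hdiff : ∃ i, σ₁ i ≠ σ₂ i := by
      by_contra h
      push_neg at h
      exact hne (Equiv.ext h)
    obtain ⟨i₀, hi₀⟩ := hdiff
    have hdist : ε ≤ dist (concat (x ∘ σ₁)) (concat (x ∘ σ₂)) := by
      rw [dist_concat_concat]
      have h1 : ε ≤ dist (x (σ₁ i₀)) (x (σ₂ i₀)) := hεle _ _ hi₀
      have h2 : dist ((x ∘ σ₁) i₀) ((x ∘ σ₂) i₀) ^ 2 ≤
          ∑ i, dist ((x ∘ σ₁) i) ((x ∘ σ₂) i) ^ 2 :=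
        Finset.single_le_sum (f := fun i => dist ((x ∘ σ₁) i) ((x ∘ σ₂) i) ^ 2)
          (fun i _ => sq_nonneg _) (Finset.mem_univ i₀)
      calc ε ≤ dist (x (σ₁ i₀)) (x (σ₂ i₀)) := h1
        _ = Real.sqrt (dist ((x ∘ σ₁) i₀) ((x ∘ σ₂) i₀) ^ 2) :=
            (Real.sqrt_sq dist_nonneg).symm
        _ ≤ Real.sqrt (∑ i, dist ((x ∘ σ₁) i) ((x ∘ σ₂) i) ^ 2) := Real.sqrt_le_sqrt h2
    have h3 : 2 * Real.sqrt n * δ < ε := by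
      have h4 : 2 * Real.sqrt n * δ < 2 * Real.sqrt n * c :=
        (mul_lt_mul_iff_right₀ (by positivity)).2 hδc
      have h5 : 2 * Real.sqrt n * c < ε := by
        rw [hc, mul_div_assoc']
        rw [div_lt_iff₀ hden]
        nlinarith [hεpos]
      linarith
    calc Real.sqrt n * δ + Real.sqrt n * δ = 2 * Real.sqrt n * δ := by ring
      _ < ε := h3
      _ ≤ _ := hdist
end

section
/- Let x_1, ..., x_n be pairwise distinct points in R^M and let p : R^{nM} → [0, ∞) be continuous, integrable, and invariant under block permutations (p(y_{σ(1:n)}) = p(y_{1:n}) for all σ ∈ S_n). Then for all sufficiently small δ > 0, the integral of p over the Wasserstein ball {y_{1:n} : d_W(x_{1:n}, y_{1:n}) ≤ δ} equals n! times the integral of p over the single Euclidean ball of radius √n·δ centered at x_{1:n} in R^{nM}. -/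
open MeasureTheory Metric Real Asymptotics
open scoped BigOperators ENNReal

lemma concat_deconcat {n M : ℕ} (z : EuclideanSpace ℝ (Fin n × Fin M)) :
    concat (deconcat z) = z := by
  rfl

lemma dist_concat_sq {n M : ℕ} (a b : Fin n → EuclideanSpace ℝ (Fin M)) :
    dist (concat a) (concat b) ^ 2 = ∑ i, dist (a i) (b i) ^ 2 := by
  rw [EuclideanSpace.dist_eq, Real.sq_sqrt (by positivity), Fintype.sum_prod_type]
  refine Finset.sum_congr rfl fun i _ => ?_
  rw [EuclideanSpace.dist_eq, Real.sq_sqrt (by positivity)]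
  rfl

lemma ciInf_le_iff_fin {ι : Type*} [Finite ι] [Nonempty ι] (f : ι → ℝ) (c : ℝ) :
    (⨅ i, f i) ≤ c ↔ ∃ i, f i ≤ c := by
  obtain ⟨i0, hi0⟩ := Finite.exists_min f
  have h1 : (⨅ i, f i) = f i0 :=
    le_antisymm (ciInf_le (Finite.bddBelow_range f) i0) (le_ciInf hi0)
  rw [h1]
  exact ⟨fun h => ⟨i0, h⟩, fun ⟨i, hi⟩ => le_trans (hi0 i) hi⟩


lemma mem_wball_iff {n M : ℕ} (x : Fin n → EuclideanSpace ℝ (Fin M))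
    {δ : ℝ} (hδ : 0 ≤ δ) (z : EuclideanSpace ℝ (Fin n × Fin M)) :
    dW x (deconcat z) ≤ δ ↔
      ∃ σ : Equiv.Perm (Fin n), z ∈ closedBall (concat (x ∘ σ)) (Real.sqrt n * δ) := by
  have hr : (Real.sqrt n * δ) ^ 2 = n * δ ^ 2 := by
    rw [mul_pow, Real.sq_sqrt (by positivity)]
  have hball : ∀ σ : Equiv.Perm (Fin n),
      z ∈ closedBall (concat (x ∘ σ)) (Real.sqrt n * δ) ↔
        ∑ i, dist (deconcat z i) (x (σ i)) ^ 2 ≤ (n : ℝ) * δ ^ 2 := by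
    intro σ
    have hd : dist z (concat (x ∘ σ)) ^ 2 = ∑ i, dist (deconcat z i) (x (σ i)) ^ 2 := by
      conv_lhs => rw [← concat_deconcat z]
      exact dist_concat_sq _ _
    rw [mem_closedBall, ← pow_le_pow_iff_left₀ dist_nonneg (by positivity) two_ne_zero, hd, hr]
  rw [dW, Real.sqrt_le_iff]
  simp only [hδ, true_and]
  rw [ciInf_le_iff_fin]
  rcases Nat.eq_zero_or_pos n with hn | hn
  · subst hn
    constructor
    · rintro -
      exact ⟨1, (hball 1).mpr (by simp)⟩
    · rintro -
      exact ⟨1, by simp; positivity⟩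
  · have hn' : (0 : ℝ) < n := by exact_mod_cast hn
    constructor
    · rintro ⟨σ, hσ⟩
      refine ⟨σ⁻¹, (hball σ⁻¹).mpr ?_⟩
      have hsum : ∑ i, dist (deconcat z i) (x (σ⁻¹ i)) ^ 2
          = ∑ i, dist (x i) (deconcat z (σ i)) ^ 2 := by
        rw [← Equiv.sum_comp σ (fun i => dist (deconcat z i) (x (σ⁻¹ i)) ^ 2)]
        refine Finset.sum_congr rfl fun i _ => ?_
        rw [Equiv.Perm.inv_def, Equiv.symm_apply_apply, dist_comm]
      rw [hsum]
      rw [one_div, inv_mul_le_iff₀ hn'] at hσ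
      exact hσ
    · rintro ⟨σ, hσ⟩
      refine ⟨σ⁻¹, ?_⟩
      rw [one_div, inv_mul_le_iff₀ hn']
      have hsum : ∑ i, dist (x i) (deconcat z (σ⁻¹ i)) ^ 2
          = ∑ i, dist (deconcat z i) (x (σ i)) ^ 2 := by
        rw [← Equiv.sum_comp σ (fun i => dist (x i) (deconcat z (σ⁻¹ i)) ^ 2)]
        refine Finset.sum_congr rfl fun i _ => ?_
        rw [Equiv.Perm.inv_def, Equiv.symm_apply_apply, dist_comm]
      rw [hsum]
      exact (hball σ).mp hσ

theorem stmt10 {n M : ℕ} (x : Fin n → EuclideanSpace ℝ (Fin M))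
    (hx : Function.Injective x)
    (p : EuclideanSpace ℝ (Fin n × Fin M) → ℝ) (hc : Continuous p)
    (h0 : ∀ z, 0 ≤ p z) (hint : Integrable p)
    (hinv : ∀ (σ : Equiv.Perm (Fin n)) (y : Fin n → EuclideanSpace ℝ (Fin M)),
      p (concat (y ∘ σ)) = p (concat y)) :
    ∃ δ₀ > 0, ∀ δ : ℝ, 0 < δ → δ < δ₀ →
      (∫ z in {z : EuclideanSpace ℝ (Fin n × Fin M) | dW x (deconcat z) ≤ δ}, p z) =
        (n.factorial : ℝ) * ∫ z in closedBall (concat x) (Real.sqrt n * δ), p z := by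
  classical
  set c : Equiv.Perm (Fin n) → EuclideanSpace ℝ (Fin n × Fin M) :=
    fun σ => concat (x ∘ σ) with hc_def
  have hcinj : Function.Injective c := by
    intro σ τ h
    ext i
    have hxy : x (σ i) = x (τ i) := (WithLp.ext_iff 2).mpr (funext fun m => congrFun ((WithLp.ext_iff 2).mp h) (i, m))
    exact congrArg Fin.val (hx hxy)
  obtain ⟨ε, hε, hsep⟩ : ∃ ε > 0, ∀ σ τ : Equiv.Perm (Fin n), σ ≠ τ → ε ≤ dist (c σ) (c τ) := by
    set g : Equiv.Perm (Fin n) × Equiv.Perm (Fin n) → ℝ :=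
      fun q => if q.1 = q.2 then 1 else dist (c q.1) (c q.2) with hg
    obtain ⟨q0, hq0⟩ := Finite.exists_min g
    refine ⟨g q0, ?_, fun σ τ hst => ?_⟩
    · rcases eq_or_ne q0.1 q0.2 with h | h
      · simp [hg, h]
      · simp only [hg, if_neg h]
        exact dist_pos.mpr fun hd => h (hcinj hd)
    · have h1 := hq0 (σ, τ)
      simpa [hg, hst] using h1
  refine ⟨ε / (2 * (Real.sqrt n + 1)), by positivity, fun δ hδ hδ0 => ?_⟩
  have hs0 : (0:ℝ) ≤ Real.sqrt n := Real.sqrt_nonneg n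
  rw [lt_div_iff₀ (by positivity)] at hδ0
  have hrle : 2 * (Real.sqrt n * δ) < ε := by nlinarith
  set r : ℝ := Real.sqrt n * δ with hr_def
  have hr : 0 ≤ r := by positivity
  have hset : {z : EuclideanSpace ℝ (Fin n × Fin M) | dW x (deconcat z) ≤ δ} =
      ⋃ σ : Equiv.Perm (Fin n), closedBall (c σ) r := by
    ext z
    simp only [Set.mem_setOf_eq, Set.mem_iUnion]
    exact mem_wball_iff x hδ.le z
  have hdisj : Pairwise (Function.onFun Disjoint fun σ : Equiv.Perm (Fin n) =>
      closedBall (c σ) r) := by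
    intro σ τ hst
    refine Set.disjoint_left.mpr fun z hz1 hz2 => ?_
    have h1 : dist (c σ) (c τ) ≤ 2 * r :=
      calc dist (c σ) (c τ) ≤ dist (c σ) z + dist z (c τ) := dist_triangle _ _ _
        _ ≤ r + r := add_le_add (by rw [dist_comm]; exact mem_closedBall.mp hz1)
            (mem_closedBall.mp hz2)
        _ = 2 * r := by ring
    exact absurd (hsep σ τ hst) (by linarith)
  have hterm : ∀ σ : Equiv.Perm (Fin n),
      (∫ z in closedBall (c σ) r, p z) = ∫ z in closedBall (concat x) r, p z := by
    intro σ
    set e : EuclideanSpace ℝ (Fin n × Fin M) ≃ₗᵢ[ℝ] EuclideanSpace ℝ (Fin n × Fin M) :=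
      LinearIsometryEquiv.piLpCongrLeft 2 ℝ ℝ
        ((σ⁻¹ : Equiv.Perm (Fin n)).prodCongr (Equiv.refl (Fin M))) with he_def
    have happ : ∀ z : EuclideanSpace ℝ (Fin n × Fin M),
        e z = concat (deconcat z ∘ σ) := by
      intro z
      ext q
      obtain ⟨i, m⟩ := q
      simp only [he_def, LinearIsometryEquiv.piLpCongrLeft_apply, Equiv.piCongrLeft'_apply,
        Equiv.prodCongr_symm, Equiv.symm_symm, Equiv.prodCongr_apply, Equiv.refl_symm,
        Equiv.Perm.inv_def, Prod.map_apply, Equiv.refl_apply]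
      rfl
    have hpe : ∀ z, p (e z) = p z := by
      intro z
      rw [happ, hinv σ (deconcat z), concat_deconcat]
    have himg : e '' closedBall (concat x) r = closedBall (c σ) r := by
      have h1 : (e '' closedBall (concat x) r) = closedBall (e (concat x)) r := by
        rw [← LinearIsometryEquiv.coe_toIsometryEquiv, IsometryEquiv.image_closedBall]
      have h2 : e (concat x) = c σ := by
        rw [happ]
        ext q
        rfl
      rw [h1, h2]
    calc (∫ z in closedBall (c σ) r, p z)
        = ∫ z in e '' closedBall (concat x) r, p z := by rw [himg]
      _ = ∫ z in closedBall (concat x) r, p (e z) :=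
          e.measurePreserving.setIntegral_image_emb
            (e.toHomeomorph.measurableEmbedding) p _
      _ = ∫ z in closedBall (concat x) r, p z := by simp only [hpe]
  rw [hset, integral_iUnion (fun σ => measurableSet_closedBall) hdisj hint.integrableOn,
    tsum_fintype]
  simp only [hterm]
  rw [Finset.sum_const, Finset.card_univ, Fintype.card_perm, Fintype.card_fin,
    nsmul_eq_mul]
end
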